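/- For any prime p > 3, Σ_{k=1}^{(p−1)/2} (−3)^k/k ≡ −2·q_p(2) (mod p), where q_p(2) = (2^{p−1} − 1)/p is the Fermat quotient. -/

import Mathlib

open Finset

private lemma aux_sum_range_two_mul {M : Type*} [AddCommMonoid M] (n : ℕ) (f : ℕ → M) :
    ∑ k ∈ range (2 * n), f k = ∑ j ∈ range n, (f (2 * j) + f (2 * j + 1)) := by
  induction n with
  | zero => simp
  | succ n ih =>
    have h : 2 * (n + 1) = 2 * n + 1 + 1 := by ring
    rw [h, sum_range_succ, sum_range_succ, ih, sum_range_succ, add_assoc]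

private lemma aux_choose_sub_one (p : ℕ) (hp : p.Prime) :
    ∀ k, k < p → (((p - 1).choose k : ℕ) : ZMod p) = (-1) ^ k := by
  haveI : Fact p.Prime := ⟨hp⟩
  intro k
  induction k with
  | zero => simp
  | succ k ih =>
    intro h
    have hk := ih (Nat.lt_of_succ_lt h)
    have hp0 : p - 1 + 1 = p := Nat.succ_pred_eq_of_pos hp.pos
    have hpas : p.choose (k + 1) = (p - 1).choose k + (p - 1).choose (k + 1) := by
      conv_lhs => rw [← hp0]
      exact Nat.choose_succ_succ _ _
    have hzero : ((p.choose (k + 1) : ℕ) : ZMod p) = 0 :=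
      (ZMod.natCast_eq_zero_iff _ _).mpr
        (hp.dvd_choose_self (Nat.succ_ne_zero k) h)
    have := congrArg (Nat.cast : ℕ → ZMod p) hpas
    push_cast at this
    rw [hzero, hk] at this
    have : (((p - 1).choose (k + 1) : ℕ) : ZMod p) = -(-1) ^ k := by linear_combination -this
    rw [this, pow_succ]
    ring

private lemma aux_zsqrtd (p : ℕ) (hp : p.Prime) (hp3 : 3 < p) :
    ((1 + Zsqrtd.sqrtd : ℤ√(-3))) ^ p + ((1 - Zsqrtd.sqrtd : ℤ√(-3))) ^ p
      = ((2 ^ p : ℤ) : ℤ√(-3)) := by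
  set t : ℤ√(-3) := Zsqrtd.sqrtd with ht
  have ha : (1 + t : ℤ√(-3)) = ⟨1, 1⟩ := by ext <;> simp [ht]
  have hb : (1 - t : ℤ√(-3)) = ⟨1, -1⟩ := by ext <;> simp [ht]
  have ha2 : (⟨1, 1⟩ : ℤ√(-3)) * ⟨1, 1⟩ = ⟨-2, 2⟩ := by
    ext <;> simp [Zsqrtd.re_mul, Zsqrtd.im_mul]
  have hb2 : (⟨1, -1⟩ : ℤ√(-3)) * ⟨1, -1⟩ = ⟨-2, -2⟩ := by
    ext <;> simp [Zsqrtd.re_mul, Zsqrtd.im_mul]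
  have ha3 : (1 + t : ℤ√(-3)) ^ 3 = ((-8 : ℤ) : ℤ√(-3)) := by
    rw [ha, pow_succ, pow_succ, pow_one, ha2]
    ext <;> simp [Zsqrtd.re_mul, Zsqrtd.im_mul, Zsqrtd.re_intCast, Zsqrtd.im_intCast]
  have hb3 : (1 - t : ℤ√(-3)) ^ 3 = ((-8 : ℤ) : ℤ√(-3)) := by
    rw [hb, pow_succ, pow_succ, pow_one, hb2]
    ext <;> simp [Zsqrtd.re_mul, Zsqrtd.im_mul, Zsqrtd.re_intCast, Zsqrtd.im_intCast]
  have ha6 : (1 + t : ℤ√(-3)) ^ 6 = ((2 ^ 6 : ℤ) : ℤ√(-3)) := by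
    have : (6 : ℕ) = 3 * 2 := by norm_num
    rw [this, pow_mul, ha3]
    push_cast
    ring
  have hb6 : (1 - t : ℤ√(-3)) ^ 6 = ((2 ^ 6 : ℤ) : ℤ√(-3)) := by
    have : (6 : ℕ) = 3 * 2 := by norm_num
    rw [this, pow_mul, hb3]
    push_cast
    ring
  -- p % 6 = 1 or 5
  have h2 : p % 2 = 1 := by
    rcases hp.eq_two_or_odd with h | h
    · omega
    · exact h
  have h3 : p % 3 ≠ 0 := by
    intro h
    have hdvd : (3 : ℕ) ∣ p := Nat.dvd_of_mod_eq_zero h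
    have := (Nat.prime_dvd_prime_iff_eq (by norm_num) hp).mp hdvd
    omega
  have hr : p % 6 = 1 ∨ p % 6 = 5 := by omega
  have hdecomp : p = 6 * (p / 6) + p % 6 := by omega
  set s := p / 6 with hs
  have hsplit : ∀ x : ℤ√(-3), x ^ 6 = ((2 ^ 6 : ℤ) : ℤ√(-3)) →
      x ^ p = ((2 ^ (6 * s) : ℤ) : ℤ√(-3)) * x ^ (p % 6) := by
    intro x hx
    conv_lhs => rw [hdecomp]
    rw [pow_add, pow_mul, hx, ← Int.cast_pow, ← pow_mul]
  rw [hsplit _ ha6, hsplit _ hb6, ← mul_add]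
  have key : (1 + t : ℤ√(-3)) ^ (p % 6) + (1 - t : ℤ√(-3)) ^ (p % 6)
      = ((2 ^ (p % 6) : ℤ) : ℤ√(-3)) := by
    rcases hr with h | h
    · rw [h]
      push_cast
      ring
    · rw [h]
      have h5a : (1 + t : ℤ√(-3)) ^ 5 = (1 + t) ^ 3 * ((1 + t) * (1 + t)) := by ring
      have h5b : (1 - t : ℤ√(-3)) ^ 5 = (1 - t) ^ 3 * ((1 - t) * (1 - t)) := by ring
      rw [h5a, h5b, ha3, hb3, ha, hb, ha2, hb2, ← mul_add]
      have : (⟨-2, 2⟩ + ⟨-2, -2⟩ : ℤ√(-3)) = ((-4 : ℤ) : ℤ√(-3)) := by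
        ext <;> simp [Zsqrtd.re_intCast, Zsqrtd.im_intCast]
      rw [this, ← Int.cast_mul]
      norm_num
  rw [key, ← Int.cast_mul, ← pow_add, ← hdecomp]

private lemma aux_key_int (p : ℕ) (hp : p.Prime) (hp3 : 3 < p) :
    ∑ j ∈ range ((p - 1) / 2 + 1), (p.choose (2 * j) : ℤ) * (-3) ^ j = 2 ^ (p - 1) := by
  have h2 : p % 2 = 1 := by
    rcases hp.eq_two_or_odd with h | h
    · omega
    · exact h
  set t : ℤ√(-3) := Zsqrtd.sqrtd with ht
  have ht2 : t ^ 2 = ((-3 : ℤ) : ℤ√(-3)) := by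
    rw [pow_two, ht, Zsqrtd.dmuld]
  have hbin : ∀ u : ℤ√(-3), (1 + u) ^ p
      = ∑ k ∈ range (p + 1), u ^ k * (p.choose k : ℤ√(-3)) := by
    intro u
    rw [add_comm, add_pow]
    simp
  have hm : p + 1 = 2 * ((p - 1) / 2 + 1) := by omega
  have hsum : ((1 + t : ℤ√(-3))) ^ p + ((1 - t : ℤ√(-3))) ^ p
      = ((∑ j ∈ range ((p - 1) / 2 + 1), 2 * (p.choose (2 * j) : ℤ) * (-3) ^ j : ℤ) : ℤ√(-3)) := by
    have hb' : (1 - t : ℤ√(-3)) = 1 + (-t) := by ring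
    rw [hbin t, hb', hbin (-t), ← sum_add_distrib]
    rw [hm, aux_sum_range_two_mul]
    rw [Int.cast_sum]
    refine sum_congr rfl fun j _ => ?_
    have he : (-t) ^ (2 * j) = t ^ (2 * j) := Even.neg_pow (even_two_mul j) t
    have ho : (-t) ^ (2 * j + 1) = -(t ^ (2 * j + 1)) := Odd.neg_pow (odd_two_mul_add_one j) t
    rw [he, ho]
    have htj : t ^ (2 * j) = (((-3 : ℤ) ^ j : ℤ) : ℤ√(-3)) := by
      rw [pow_mul, ht2, Int.cast_pow]
    rw [htj]
    push_cast
    ring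
  rw [aux_zsqrtd p hp hp3] at hsum
  have hinj : Function.Injective ((Int.cast) : ℤ → ℤ√(-3)) := fun x y h => by
    simpa using congrArg Zsqrtd.re h
  have hZ : (2 ^ p : ℤ) = ∑ j ∈ range ((p - 1) / 2 + 1), 2 * (p.choose (2 * j) : ℤ) * (-3) ^ j :=
    hinj hsum
  have h2p : (2 ^ p : ℤ) = 2 * 2 ^ (p - 1) := by
    conv_lhs => rw [show p = (p - 1) + 1 by omega]
    ring
  have : (2 : ℤ) * ∑ j ∈ range ((p - 1) / 2 + 1), (p.choose (2 * j) : ℤ) * (-3) ^ j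
      = 2 * 2 ^ (p - 1) := by
    rw [mul_sum, ← h2p, hZ]
    refine sum_congr rfl fun j _ => by ring
  exact mul_left_cancel₀ (by norm_num) this

theorem sum_neg_three_pow_div_eq_fermat_quotient (p : ℕ) (hp : p.Prime) (hp3 : 3 < p) :
    ∑ k ∈ Finset.Icc 1 ((p - 1) / 2), (-3 : ZMod p) ^ k * (k : ZMod p)⁻¹ =
      -2 * (((2 ^ (p - 1) - 1) / p : ℤ) : ZMod p) := by
  haveI : Fact p.Prime := ⟨hp⟩
  set m := (p - 1) / 2 with hm
  have h2 : p % 2 = 1 := by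
    rcases hp.eq_two_or_odd with h | h
    · omega
    · exact h
  have hpm : p = 2 * m + 1 := by omega
  -- Fermat quotient q
  have hdvd : (p : ℤ) ∣ 2 ^ (p - 1) - 1 := by
    have h2ne : (2 : ZMod p) ≠ 0 := by
      intro h
      have : ((2 : ℕ) : ZMod p) = 0 := by exact_mod_cast h
      rw [ZMod.natCast_eq_zero_iff] at this
      have := Nat.le_of_dvd (by norm_num) this
      omega
    have := ZMod.pow_card_sub_one_eq_one h2ne
    have h0 : ((2 ^ (p - 1) - 1 : ℤ) : ZMod p) = 0 := by
      push_cast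
      rw [this]
      ring
    exact_mod_cast (ZMod.intCast_zmod_eq_zero_iff_dvd _ _).mp h0
  set q : ℤ := (2 ^ (p - 1) - 1) / p with hq
  have hpq : (p : ℤ) * q = 2 ^ (p - 1) - 1 := Int.mul_ediv_cancel' hdvd
  -- integer identity
  have hkey := aux_key_int p hp hp3
  -- split off j = 0 term
  have hsplit : ∑ j ∈ range (m + 1), (p.choose (2 * j) : ℤ) * (-3) ^ j
      = (∑ i ∈ range m, (p.choose (2 * (i + 1)) : ℤ) * (-3) ^ (i + 1)) + 1 := by
    rw [Finset.sum_range_succ']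
    simp
  rw [hsplit] at hkey
  have hkey2 : ∑ i ∈ range m, (p.choose (2 * (i + 1)) : ℤ) * (-3) ^ (i + 1)
      = (p : ℤ) * q := by rw [hpq]; linarith
  -- choose p (2j) = p * c j
  have hcdvd : ∀ i, i < m → p ∣ p.choose (2 * (i + 1)) := by
    intro i hi
    exact hp.dvd_choose_self (by omega) (by omega)
  have hkey3 : ∑ i ∈ range m, ((p.choose (2 * (i + 1)) / p : ℕ) : ℤ) * (-3) ^ (i + 1) = q := by
    have : (p : ℤ) * ∑ i ∈ range m, ((p.choose (2 * (i + 1)) / p : ℕ) : ℤ) * (-3) ^ (i + 1)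
        = (p : ℤ) * q := by
      rw [← hkey2, mul_sum]
      refine sum_congr rfl fun i hi => ?_
      rw [← mul_assoc]
      congr 1
      rw [← Int.natCast_mul, Nat.mul_div_cancel' (hcdvd i (mem_range.mp hi))]
    exact mul_left_cancel₀ (by exact_mod_cast hp.pos.ne') this
  -- cast to ZMod p
  have hkey4 : ∑ i ∈ range m, ((p.choose (2 * (i + 1)) / p : ℕ) : ZMod p) * (-3) ^ (i + 1)
      = (q : ZMod p) := by
    have h := congrArg (Int.cast : ℤ → ZMod p) hkey3
    rw [Int.cast_sum] at h
    rw [← h]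
    refine sum_congr rfl fun i hi => ?_
    rw [Int.cast_mul, Int.cast_natCast, Int.cast_pow, Int.cast_neg, Int.cast_ofNat]
  -- identify the quotients mod p
  have hterm : ∀ i, i < m → ((p.choose (2 * (i + 1)) / p : ℕ) : ZMod p)
      = -(((2 * (i + 1) : ℕ) : ZMod p))⁻¹ := by
    intro i hi
    set k := 2 * (i + 1) with hk
    have hkp : k < p := by omega
    have hk0 : k ≠ 0 := by omega
    -- p * choose (p-1) (k-1) = choose p k * k
    have hnat : p * (p - 1).choose (k - 1) = p.choose k * k := by
      have := Nat.add_one_mul_choose_eq (p - 1) (k - 1)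
      have h1 : p - 1 + 1 = p := by omega
      have h2' : k - 1 + 1 = k := by omega
      rwa [h1, h2'] at this
    have hc : p.choose k = p * (p.choose k / p) :=
      (Nat.mul_div_cancel' (hcdvd i hi)).symm
    rw [hc, mul_assoc] at hnat
    have hnat2 : (p - 1).choose (k - 1) = p.choose k / p * k :=
      Nat.eq_of_mul_eq_mul_left hp.pos hnat
    have hcast := congrArg (Nat.cast : ℕ → ZMod p) hnat2
    rw [aux_choose_sub_one p hp (k - 1) (by omega)] at hcast
    have hodd : (-1 : ZMod p) ^ (k - 1) = -1 := by
      have : k - 1 = 2 * i + 1 := by omega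
      rw [this, pow_succ, pow_mul]
      norm_num
    rw [hodd, Nat.cast_mul] at hcast
    have hkne : ((k : ℕ) : ZMod p) ≠ 0 := by
      rw [Ne, ZMod.natCast_eq_zero_iff]
      intro hd
      have := Nat.le_of_dvd (by omega) hd
      omega
    have hk1 : ((k : ℕ) : ZMod p) * ((k : ℕ) : ZMod p)⁻¹ = 1 := mul_inv_cancel₀ hkne
    linear_combination (-(((k : ℕ) : ZMod p)⁻¹)) * hcast
      - ((p.choose k / p : ℕ) : ZMod p) * hk1
  -- rewrite sum using hterm
  have hkey5 : ∑ i ∈ range m, -(((2 * (i + 1) : ℕ) : ZMod p))⁻¹ * (-3) ^ (i + 1)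
      = (q : ZMod p) := by
    rw [← hkey4]
    exact sum_congr rfl fun i hi => by rw [hterm i (mem_range.mp hi)]
  -- final manipulation
  have hIcc : ∑ k ∈ Finset.Icc 1 m, (-3 : ZMod p) ^ k * (k : ZMod p)⁻¹
      = ∑ i ∈ range m, (-3 : ZMod p) ^ (i + 1) * ((i + 1 : ℕ) : ZMod p)⁻¹ := by
    rw [← Finset.Ico_add_one_right_eq_Icc, Finset.sum_Ico_eq_sum_range]
    simp [add_comm]
  have h2ne : (2 : ZMod p) ≠ 0 := by
    intro h
    have : ((2 : ℕ) : ZMod p) = 0 := by exact_mod_cast h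
    rw [ZMod.natCast_eq_zero_iff] at this
    have := Nat.le_of_dvd (by norm_num) this
    omega
  have hfin : ∑ i ∈ range m, (-3 : ZMod p) ^ (i + 1) * ((i + 1 : ℕ) : ZMod p)⁻¹
      = -2 * (q : ZMod p) := by
    rw [← hkey5, mul_sum]
    refine sum_congr rfl fun i hi => ?_
    have hinv : (((2 * (i + 1) : ℕ) : ZMod p))⁻¹ = 2⁻¹ * ((i + 1 : ℕ) : ZMod p)⁻¹ := by
      push_cast
      rw [mul_inv]
    rw [hinv]
    have h21 : (2 : ZMod p) * 2⁻¹ = 1 := mul_inv_cancel₀ h2ne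
    linear_combination (-(((i + 1 : ℕ) : ZMod p)⁻¹ * (-3 : ZMod p) ^ (i + 1))) * h21
  rw [hIcc, hfin]
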